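/- For every real parameter 0 < a ≤ 1, the degree of regularity of F_a equals a: there exist constants C₀, C₁ > 0 such that |F_a(s)| ≤ C₁|s|^a for all |s| ≥ C₀, and for every real n < a there are no constants C₀, C₁ > 0 with |F_a(s)| ≤ C₁|s|^n for all |s| ≥ C₀. -/

import Mathlib

/-- `F_a(s) = C_a (log(e^{s-1}+1) + log(e^{1-s}+1))^a` with
`C_a = 1/(a 2^{a-2} (log 2)^{a-1})`, for `0 < a ≤ 1`. -/
noncomputable def Fa (a : ℝ) (s : ℝ) : ℝ :=
  (1 / (a * (2 : ℝ) ^ (a - 2) * Real.log 2 ^ (a - 1))) *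
    (Real.log (Real.exp (s - 1) + 1) + Real.log (Real.exp (1 - s) + 1)) ^ a

lemma log_exp_add_one_nonneg (t : ℝ) : 0 ≤ Real.log (Real.exp t + 1) :=
  Real.log_nonneg (by nlinarith [Real.exp_pos t])

lemma le_log_exp_add_one (t : ℝ) : t ≤ Real.log (Real.exp t + 1) :=
  (Real.le_log_iff_exp_le (by positivity)).mpr (by linarith)

lemma log_exp_add_one_le (t : ℝ) : Real.log (Real.exp t + 1) ≤ |t| + Real.log 2 := by
  rw [Real.log_le_iff_le_exp (by positivity), Real.exp_add, Real.exp_log two_pos]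
  have h1 : Real.exp t ≤ Real.exp |t| := Real.exp_le_exp.mpr (le_abs_self t)
  have h2 : (1:ℝ) ≤ Real.exp |t| := Real.one_le_exp (abs_nonneg t)
  nlinarith

theorem stmt_4 (a : ℝ) (ha0 : 0 < a) (ha1 : a ≤ 1) :
    (∃ C₀ C₁ : ℝ, 0 < C₀ ∧ 0 < C₁ ∧
      ∀ s : ℝ, C₀ ≤ |s| → |Fa a s| ≤ C₁ * |s| ^ a) ∧
    (∀ n : ℝ, n < a →
      ¬ ∃ C₀ C₁ : ℝ, 0 < C₀ ∧ 0 < C₁ ∧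
        ∀ s : ℝ, C₀ ≤ |s| → |Fa a s| ≤ C₁ * |s| ^ n) := by
  have hlog2 : 0 < Real.log 2 := Real.log_pos one_lt_two
  have hCa : 0 < 1 / (a * (2 : ℝ) ^ (a - 2) * Real.log 2 ^ (a - 1)) := by positivity
  set Ca := 1 / (a * (2 : ℝ) ^ (a - 2) * Real.log 2 ^ (a - 1)) with hCadef
  set G : ℝ → ℝ := fun s =>
    Real.log (Real.exp (s - 1) + 1) + Real.log (Real.exp (1 - s) + 1) with hGdef
  have hGnn : ∀ s : ℝ, 0 ≤ G s :=
    fun s => add_nonneg (log_exp_add_one_nonneg _) (log_exp_add_one_nonneg _)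
  have hFaabs : ∀ s : ℝ, |Fa a s| = Ca * (G s) ^ a := by
    intro s
    have : Fa a s = Ca * (G s) ^ a := rfl
    rw [this, abs_of_nonneg (mul_nonneg hCa.le (Real.rpow_nonneg (hGnn s) a))]
  -- G lower bound: |s - 1| ≤ G s
  have hGlb : ∀ s : ℝ, |s - 1| ≤ G s := by
    intro s
    have h1 := le_log_exp_add_one (s - 1)
    have h2 := le_log_exp_add_one (1 - s)
    have h3 := log_exp_add_one_nonneg (s - 1)
    have h4 := log_exp_add_one_nonneg (1 - s)
    rcases abs_cases (s - 1) with ⟨h, _⟩ | ⟨h, _⟩ <;> rw [h] <;> simp only [hGdef] <;> linarith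
  -- G upper bound
  have hGub : ∀ s : ℝ, G s ≤ 2 * |s| + 4 := by
    intro s
    have h1 := log_exp_add_one_le (s - 1)
    have h2 := log_exp_add_one_le (1 - s)
    have h3 : |s - 1| ≤ |s| + 1 := by
      calc |s - 1| ≤ |s| + |(-1 : ℝ)| := abs_add_le s (-1)
      _ = |s| + 1 := by norm_num
    have h4 : |1 - s| ≤ |s| + 1 := by rw [abs_sub_comm]; exact h3
    have h5 : Real.log 2 ≤ 1 := by
      have := Real.log_le_sub_one_of_pos two_pos; linarith
    simp only [hGdef]; linarith
  constructor
  · refine ⟨4, 3 * Ca, by norm_num, by positivity, fun s hs => ?_⟩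
    rw [hFaabs]
    have hGle : G s ≤ 3 * |s| := by have := hGub s; linarith
    have h1 : (G s) ^ a ≤ (3 * |s|) ^ a := Real.rpow_le_rpow (hGnn s) hGle ha0.le
    have h2 : (3 * |s|) ^ a = 3 ^ a * |s| ^ a := Real.mul_rpow (by norm_num) (abs_nonneg s)
    have h3 : (3 : ℝ) ^ a ≤ 3 := by
      calc (3:ℝ) ^ a ≤ (3:ℝ) ^ (1:ℝ) :=
            Real.rpow_le_rpow_of_exponent_le (by norm_num) ha1
        _ = 3 := Real.rpow_one 3
    have h4 : (0:ℝ) ≤ |s| ^ a := Real.rpow_nonneg (abs_nonneg s) a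
    calc Ca * (G s) ^ a ≤ Ca * (3 ^ a * |s| ^ a) := by
          apply mul_le_mul_of_nonneg_left _ hCa.le
          rw [← h2]; exact h1
      _ ≤ Ca * (3 * |s| ^ a) := by
          apply mul_le_mul_of_nonneg_left _ hCa.le
          exact mul_le_mul_of_nonneg_right h3 h4
      _ = 3 * Ca * |s| ^ a := by ring
  · rintro n hn ⟨C₀, C₁, hC₀, hC₁, h⟩
    have hd : 0 < a - n := by linarith
    set K := C₁ * 2 ^ a / Ca with hKdef
    have hK : 0 < K := by positivity
    set s := max (max C₀ 2) ((K + 1) ^ (a - n)⁻¹) with hsdef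
    have hs2 : (2:ℝ) ≤ s := le_trans (le_max_right C₀ 2) (le_max_left _ _)
    have hs0 : (0:ℝ) < s := by linarith
    have hsC₀ : C₀ ≤ s := le_trans (le_max_left C₀ 2) (le_max_left _ _)
    have hsK : (K + 1) ^ (a - n)⁻¹ ≤ s := le_max_right _ _
    have habs : |s| = s := abs_of_pos hs0
    have hb := h s (by rw [habs]; exact hsC₀)
    rw [hFaabs, habs] at hb
    -- lower bound on Ca * (G s)^a
    have hGs : s / 2 ≤ G s :=
      le_trans (by rw [abs_of_nonneg (by linarith : (0:ℝ) ≤ s - 1)]; linarith) (hGlb s)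
    have hlow : Ca * (s / 2) ^ a ≤ Ca * (G s) ^ a :=
      mul_le_mul_of_nonneg_left (Real.rpow_le_rpow (by positivity) hGs ha0.le) hCa.le
    have hdiv : (s / 2) ^ a = s ^ a / 2 ^ a := Real.div_rpow hs0.le (by norm_num : (0:ℝ) ≤ 2) a
    have key : Ca * (s ^ a / 2 ^ a) ≤ C₁ * s ^ n := by
      rw [← hdiv]; exact le_trans hlow hb
    -- so s ^ (a - n) ≤ K
    have h2a : (0:ℝ) < (2:ℝ) ^ a := Real.rpow_pos_of_pos two_pos a
    have hsn : (0:ℝ) < s ^ n := Real.rpow_pos_of_pos hs0 n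
    have hsplit : s ^ a = s ^ n * s ^ (a - n) := by
      rw [← Real.rpow_add hs0]; ring_nf
    have hfin : s ^ (a - n) ≤ K := by
      have h1 : s ^ a ≤ K * s ^ n := by
        rw [hKdef]
        rw [div_mul_eq_mul_div, le_div_iff₀ hCa]
        calc s ^ a * Ca = Ca * (s ^ a / 2 ^ a) * 2 ^ a := by field_simp
          _ ≤ C₁ * s ^ n * 2 ^ a := by
              exact mul_le_mul_of_nonneg_right key h2a.le
          _ = C₁ * 2 ^ a * s ^ n := by ring
      rw [hsplit] at h1
      have := (mul_le_mul_iff_of_pos_right hsn).mp (by linarith [h1] : s ^ (a-n) * s ^ n ≤ K * s ^ n)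
      exact this
    -- but s ^ (a - n) ≥ K + 1
    have hbig : K + 1 ≤ s ^ (a - n) := by
      have hbase : (0:ℝ) ≤ (K + 1) ^ (a - n)⁻¹ := Real.rpow_nonneg (by linarith) _
      calc K + 1 = ((K + 1) ^ (a - n)⁻¹) ^ (a - n) := by
            rw [← Real.rpow_mul (by linarith : (0:ℝ) ≤ K + 1),
              inv_mul_cancel₀ (ne_of_gt hd), Real.rpow_one]
        _ ≤ s ^ (a - n) := Real.rpow_le_rpow hbase hsK hd.le
    linarith
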